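/- Let C, K, D, B, T1, T2, T3, T4 be real n×n matrices satisfying T3 = −T2·B, T1 = T4 + T2·D, T4·D = T3 + C·T4 + K·T2, and T4·B = C·T3 + K·T1. If p : ℝ → ℝⁿ is a twice differentiable curve satisfying p'' + D·p' + B·p = 0, then the curve q := T1·p + T2·p' satisfies q' = T3·p + T4·p' and q'' + C·q' + K·q = 0. -/

import Mathlib

lemma mulVec_hasDerivAt {n : ℕ} (A : Matrix (Fin n) (Fin n) ℝ)
    {f : ℝ → Fin n → ℝ} {f' : Fin n → ℝ} {t : ℝ} (hf : HasDerivAt f f' t) :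
    HasDerivAt (fun s => A.mulVec (f s)) (A.mulVec f') t := by
  have h := (A.mulVecLin.toContinuousLinearMap.hasFDerivAt (x := f t)).comp_hasDerivAt t hf
  simpa [Function.comp_def] using h

/-- Under the four compatibility conditions, the transformation
`q := T1·p + T2·p'` carries any solution of `p'' + D·p' + B·p = 0` to a curve with
`q' = T3·p + T4·p'` solving `q'' + C·q' + K·q = 0`. -/
theorem stmt7 {n : ℕ} (C K D B T1 T2 T3 T4 : Matrix (Fin n) (Fin n) ℝ)
    (h1 : T3 = -(T2 * B)) (h2 : T1 = T4 + T2 * D)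
    (h3 : T4 * D = T3 + C * T4 + K * T2) (h4 : T4 * B = C * T3 + K * T1)
    (p p' p'' : ℝ → Fin n → ℝ)
    (hp : ∀ t, HasDerivAt p (p' t) t)
    (hp' : ∀ t, HasDerivAt p' (p'' t) t)
    (hpeq : ∀ t, p'' t + D.mulVec (p' t) + B.mulVec (p t) = 0) :
    (∀ t, HasDerivAt (fun s => T1.mulVec (p s) + T2.mulVec (p' s))
        (T3.mulVec (p t) + T4.mulVec (p' t)) t) ∧
    (∀ t, HasDerivAt (fun s => T3.mulVec (p s) + T4.mulVec (p' s))
        (T3.mulVec (p' t) + T4.mulVec (p'' t)) t) ∧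
    (∀ t, (T3.mulVec (p' t) + T4.mulVec (p'' t))
        + C.mulVec (T3.mulVec (p t) + T4.mulVec (p' t))
        + K.mulVec (T1.mulVec (p t) + T2.mulVec (p' t)) = 0) := by
  have hp2 : ∀ t, p'' t = -(D.mulVec (p' t) + B.mulVec (p t)) := by
    intro t
    have h := hpeq t
    rw [add_assoc] at h
    exact eq_neg_of_add_eq_zero_left h
  refine ⟨?_, ?_, ?_⟩
  · intro t
    have h := ((mulVec_hasDerivAt T1 (hp t)).add (mulVec_hasDerivAt T2 (hp' t)))
    have heq : T1.mulVec (p' t) + T2.mulVec (p'' t)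
        = T3.mulVec (p t) + T4.mulVec (p' t) := by
      rw [hp2 t, h2, h1]
      simp [Matrix.add_mulVec, Matrix.mulVec_add, Matrix.mulVec_neg,
        Matrix.neg_mulVec, ← Matrix.mulVec_mulVec]
      abel
    rw [heq] at h; exact h
  · intro t
    exact (mulVec_hasDerivAt T3 (hp t)).add (mulVec_hasDerivAt T4 (hp' t))
  · intro t
    rw [hp2 t]
    simp only [Matrix.mulVec_add, Matrix.mulVec_neg, Matrix.mulVec_mulVec]
    rw [h3, h4]
    simp only [Matrix.add_mulVec, ← Matrix.mulVec_mulVec]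
    abel
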